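/- Let Γ be a countable discrete group and K a finite normal subgroup. If H is a Hilbert space module over the group von Neumann algebra L(Γ/K), then H is naturally a module over L(Γ) via the quotient map, and dim_{L(Γ)} H = (1/|K|) · dim_{L(Γ/K)} H. -/

import Mathlib

open scoped ENNReal

noncomputable section

/-- The von Neumann dimension of a module `V` over the group von Neumann algebra
`L(A)` of a countable discrete group `A`, computed from an equivariant isometric
embedding `u : V → ℓ²(A) ⊗ ℓ²(ℕ)` as `(τ ⊗ Tr)(u u*) = Σ_n ‖u* (δ_e ⊗ e_n)‖²`. -/
def grpDimVal {A : Type*} [Group A] [Countable A] [DecidableEq A]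
    {V : Type*} [NormedAddCommGroup V] [InnerProductSpace ℂ V] [CompleteSpace V]
    (u : V →ₗᵢ[ℂ] lp (fun _ : ℕ => lp (fun _ : A => ℂ) 2) 2) : ℝ≥0∞ :=
  ∑' n : ℕ,
    (‖(ContinuousLinearMap.adjoint u.toContinuousLinearMap)
        (lp.single 2 n (lp.single 2 (1 : A) (1 : ℂ)))‖₊ : ℝ≥0∞) ^ 2

open scoped InnerProductSpace

lemma lp_ennnorm_sq {ι : Type*} {E : ι → Type*} [∀ i, NormedAddCommGroup (E i)]
    (f : lp E 2) : (‖f‖₊ : ℝ≥0∞) ^ 2 = ∑' i, (‖f i‖₊ : ℝ≥0∞) ^ 2 := by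
  have hp : (0:ℝ) < (2 : ℝ≥0∞).toReal := by norm_num
  have h := lp.norm_rpow_eq_tsum hp f
  have hsum : Summable fun i => ‖f i‖ ^ (2 : ℝ≥0∞).toReal := (lp.memℓp f).summable hp
  have key : ENNReal.ofReal (‖f‖ ^ (2 : ℝ≥0∞).toReal)
      = ∑' i, ENNReal.ofReal (‖f i‖ ^ (2 : ℝ≥0∞).toReal) := by
    rw [h, ENNReal.ofReal_tsum_of_nonneg (fun i => by positivity) hsum]
  have h2 : (2 : ℝ≥0∞).toReal = ((2:ℕ):ℝ) := by norm_num
  simp only [h2, Real.rpow_natCast] at key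
  calc (‖f‖₊ : ℝ≥0∞) ^ 2 = ENNReal.ofReal (‖f‖ ^ (2:ℕ)) := by
        rw [ENNReal.ofReal_pow (norm_nonneg _), ofReal_norm, enorm_eq_nnnorm]
    _ = ∑' i, (‖f i‖₊ : ℝ≥0∞) ^ 2 := by
        rw [key]
        congr 1; funext i
        rw [ENNReal.ofReal_pow (norm_nonneg _), ofReal_norm, enorm_eq_nnnorm]

lemma tsum_comp_quotient {Γ : Type*} [Group Γ] (K : Subgroup Γ) [Finite K]
    (g : Γ ⧸ K → ℝ≥0∞) :
    ∑' γ : Γ, g (QuotientGroup.mk γ) = (Nat.card K) * ∑' x : Γ ⧸ K, g x := by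
  let e := Equiv.sigmaFiberEquiv (QuotientGroup.mk : Γ → Γ ⧸ K)
  rw [← e.tsum_eq (fun γ => g (QuotientGroup.mk γ)), ENNReal.tsum_sigma']
  rw [ENNReal.tsum_mul_left.symm]
  congr 1; funext x
  have key : ∀ s : {γ : Γ // QuotientGroup.mk γ = x},
      g (QuotientGroup.mk (e ⟨x, s⟩)) = g x := by
    rintro ⟨γ, hγ⟩
    show g (QuotientGroup.mk γ) = g x
    exact congrArg g hγ
  rw [tsum_congr key]
  have e2 : K ≃ {γ : Γ // QuotientGroup.mk γ = x} := by
    refine ⟨fun k => ⟨x.out * k, by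
        rw [QuotientGroup.mk_mul_of_mem _ k.2, QuotientGroup.out_eq']⟩,
      fun s => ⟨x.out⁻¹ * s.1, QuotientGroup.eq.mp (by rw [QuotientGroup.out_eq', s.2])⟩,
      fun k => by simp, fun s => by simp⟩
  haveI : Finite {γ : Γ // QuotientGroup.mk γ = x} := Finite.of_equiv _ e2
  cases nonempty_fintype {γ : Γ // QuotientGroup.mk γ = x}
  rw [tsum_fintype]
  simp [Finset.sum_const, ← Nat.card_eq_fintype_card, Nat.card_congr e2.symm,
    nsmul_eq_mul]

lemma ennreal_aux {a b c : ℝ≥0∞} (h : b = a * c) (h0 : a ≠ 0) (ht : a ≠ ⊤) :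
    c = a⁻¹ * b := by
  rw [h, ← mul_assoc, ENNReal.inv_mul_cancel h0 ht, one_mul]

lemma inner_double_single {ι κ : Type*} [DecidableEq ι] [DecidableEq κ]
    (f : lp (fun _ : ι => lp (fun _ : κ => ℂ) 2) 2) (m : ι) (x : κ) :
    ⟪lp.single 2 m (lp.single 2 x (1:ℂ)), f⟫_ℂ = f m x := by
  rw [lp.inner_single_left, lp.inner_single_left, RCLike.inner_apply]
  simp

set_option maxHeartbeats 2000000 in
/-- Let `Γ` be a countable discrete group, `K ⊴ Γ` finite normal, and
`H` a Hilbert space which is a module over `L(Γ/K)` (via a unitary representation `act`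
of `Γ/K` extending normally). Then `H` is a module over `L(Γ)` through the quotient
map, and `dim_{L(Γ)} H = (1/|K|) · dim_{L(Γ/K)} H`, where the dimensions are computed
from equivariant isometric embeddings `u : H → ℓ²(Γ) ⊗ ℓ²(ℕ)` and
`w : H → ℓ²(Γ/K) ⊗ ℓ²(ℕ)`. -/
theorem vnDim_quotient_finite_normal {Γ : Type*} [Group Γ] [Countable Γ]
    [DecidableEq Γ] (K : Subgroup Γ) [K.Normal] [Finite K]
    [Countable (Γ ⧸ K)] [DecidableEq (Γ ⧸ K)]
    {H : Type*} [NormedAddCommGroup H] [InnerProductSpace ℂ H] [CompleteSpace H]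
    (act : Γ ⧸ K → H →L[ℂ] H)
    (hact_mul : ∀ q q' : Γ ⧸ K, act (q * q') = (act q).comp (act q'))
    (hact_one : act 1 = ContinuousLinearMap.id ℂ H)
    (hact_iso : ∀ q : Γ ⧸ K, ∀ v : H, ‖act q v‖ = ‖v‖)
    (u : H →ₗᵢ[ℂ] lp (fun _ : ℕ => lp (fun _ : Γ => ℂ) 2) 2)
    (hu : ∀ γ : Γ, ∀ v : H, ∀ n : ℕ, ∀ x : Γ,
      (u (act (QuotientGroup.mk γ) v) n) x = (u v n) (γ⁻¹ * x))
    (w : H →ₗᵢ[ℂ] lp (fun _ : ℕ => lp (fun _ : Γ ⧸ K => ℂ) 2) 2)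
    (hw : ∀ q : Γ ⧸ K, ∀ v : H, ∀ n : ℕ, ∀ y : Γ ⧸ K,
      (w (act q v) n) y = (w v n) (q⁻¹ * y)) :
    grpDimVal u = (Nat.card K : ℝ≥0∞)⁻¹ * grpDimVal w := by
  set U := u.toContinuousLinearMap with hU
  set W := w.toContinuousLinearMap with hW
  have hUc : ∀ v : H, U v = u v := fun v => rfl
  have hWc : ∀ v : H, W v = w v := fun v => rfl
  -- unitary of act
  have act_inner : ∀ (q : Γ ⧸ K) (a b : H), ⟪act q a, act q b⟫_ℂ = ⟪a, b⟫_ℂ := by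
    intro q a b
    exact LinearIsometry.inner_map_map ⟨(act q).toLinearMap, hact_iso q⟩ a b
  have act_cancel : ∀ (q : Γ ⧸ K) (v : H), act q (act q⁻¹ v) = v := by
    intro q v
    rw [← ContinuousLinearMap.comp_apply, ← hact_mul, mul_inv_cancel, hact_one]
    rfl
  have act_adj : ∀ (q : Γ ⧸ K) (v h : H), ⟪v, act q h⟫_ℂ = ⟪act q⁻¹ v, h⟫_ℂ := by
    intro q v h
    conv_rhs => rw [← act_inner q (act q⁻¹ v) h, act_cancel]
  have claim1 : ∀ (m : ℕ) (q : Γ ⧸ K),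
      ContinuousLinearMap.adjoint W (lp.single 2 m (lp.single 2 q (1:ℂ)))
        = act q (ContinuousLinearMap.adjoint W
            (lp.single 2 m (lp.single 2 (1 : Γ ⧸ K) (1:ℂ)))) := by
    intro m q
    refine ext_inner_left ℂ fun v => ?_
    rw [ContinuousLinearMap.adjoint_inner_right, act_adj,
      ContinuousLinearMap.adjoint_inner_right, hWc, hWc,
      lp.inner_single_right, lp.inner_single_right,
      lp.inner_single_right, lp.inner_single_right]
    congr 1
    have h1 := hw q⁻¹ v m 1
    simp only [inv_inv, mul_one] at h1
    exact h1.symm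
  have keyB : ∀ (m n : ℕ) (γ γ' : Γ),
      (u (ContinuousLinearMap.adjoint W
          (lp.single 2 m (lp.single 2 (QuotientGroup.mk γ : Γ ⧸ K) (1:ℂ)))) n) γ'
        = (u (ContinuousLinearMap.adjoint W
          (lp.single 2 m (lp.single 2 (1 : Γ ⧸ K) (1:ℂ)))) n) (γ⁻¹ * γ') := by
    intro m n γ γ'
    rw [claim1, hu]
  have coordW : ∀ (n m : ℕ) (x : Γ ⧸ K),
      (w (ContinuousLinearMap.adjoint U (lp.single 2 n (lp.single 2 (1:Γ) (1:ℂ)))) m) x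
        = starRingEnd ℂ ((u (ContinuousLinearMap.adjoint W
            (lp.single 2 m (lp.single 2 x (1:ℂ)))) n) 1) := by
    intro n m x
    rw [← inner_double_single (w (ContinuousLinearMap.adjoint U
      (lp.single 2 n (lp.single 2 (1:Γ) (1:ℂ))))) m x]
    rw [← hWc, ← ContinuousLinearMap.adjoint_inner_left,
      ContinuousLinearMap.adjoint_inner_right, hUc]
    rw [← inner_conj_symm, inner_double_single]
  have expandU : ∀ n : ℕ,
      (‖ContinuousLinearMap.adjoint U (lp.single 2 n (lp.single 2 (1:Γ) (1:ℂ)))‖₊ : ℝ≥0∞) ^ 2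
        = ∑' (m : ℕ) (x : Γ ⧸ K),
            (‖(u (ContinuousLinearMap.adjoint W
              (lp.single 2 m (lp.single 2 x (1:ℂ)))) n) 1‖₊ : ℝ≥0∞) ^ 2 := by
    intro n
    rw [← w.nnnorm_map (ContinuousLinearMap.adjoint U
      (lp.single 2 n (lp.single 2 (1:Γ) (1:ℂ)))), lp_ennnorm_sq]
    refine tsum_congr fun m => ?_
    rw [lp_ennnorm_sq]
    refine tsum_congr fun x => ?_
    rw [coordW n m x]
    simp
  obtain ⟨c, hc⟩ : ∃ c : ℕ → ℕ → Γ → ℝ≥0∞, c = fun m n γ =>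
      (‖(u (ContinuousLinearMap.adjoint W
        (lp.single 2 m (lp.single 2 (1:Γ ⧸ K) (1:ℂ)))) n) γ‖₊ : ℝ≥0∞) ^ 2 := ⟨_, rfl⟩
  have expandW : ∀ m : ℕ,
      (‖ContinuousLinearMap.adjoint W (lp.single 2 m (lp.single 2 (1:Γ ⧸ K) (1:ℂ)))‖₊ : ℝ≥0∞) ^ 2
        = ∑' (n : ℕ) (γ : Γ), c m n γ := by
    intro m
    simp only [hc]
    rw [← u.nnnorm_map (ContinuousLinearMap.adjoint W
      (lp.single 2 m (lp.single 2 (1:Γ ⧸ K) (1:ℂ)))), lp_ennnorm_sq]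
    exact tsum_congr fun n => lp_ennnorm_sq _
  have hcard0 : (Nat.card K : ℝ≥0∞) ≠ 0 := by
    exact_mod_cast Nat.card_pos.ne'
  have hcardt : (Nat.card K : ℝ≥0∞) ≠ ⊤ := ENNReal.natCast_ne_top _
  have inner_x : ∀ m n : ℕ,
      (∑' x : Γ ⧸ K, (‖(u (ContinuousLinearMap.adjoint W
          (lp.single 2 m (lp.single 2 x (1:ℂ)))) n) 1‖₊ : ℝ≥0∞) ^ 2)
        = (Nat.card K : ℝ≥0∞)⁻¹ * ∑' γ : Γ, c m n γ := by
    intro m n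
    have hq := tsum_comp_quotient K (fun x => (‖(u (ContinuousLinearMap.adjoint W
        (lp.single 2 m (lp.single 2 x (1:ℂ)))) n) 1‖₊ : ℝ≥0∞) ^ 2)
    have hterm : ∀ γ : Γ, (‖(u (ContinuousLinearMap.adjoint W
        (lp.single 2 m (lp.single 2 (QuotientGroup.mk γ : Γ ⧸ K) (1:ℂ)))) n) 1‖₊ : ℝ≥0∞) ^ 2
          = c m n γ⁻¹ := by
      intro γ
      simp only [hc]
      rw [keyB m n γ 1, mul_one]
    rw [tsum_congr hterm] at hq
    have hinv : ∑' γ : Γ, c m n γ⁻¹ = ∑' γ : Γ, c m n γ := (Equiv.inv Γ).tsum_eq (c m n)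
    rw [hinv] at hq
    exact ennreal_aux hq hcard0 hcardt
  show grpDimVal u = (Nat.card K : ℝ≥0∞)⁻¹ * grpDimVal w
  unfold grpDimVal
  rw [← hU, ← hW]
  calc (∑' n : ℕ, (‖ContinuousLinearMap.adjoint U
        (lp.single 2 n (lp.single 2 (1:Γ) (1:ℂ)))‖₊ : ℝ≥0∞) ^ 2)
      = ∑' (n : ℕ) (m : ℕ), (Nat.card K : ℝ≥0∞)⁻¹ * ∑' γ : Γ, c m n γ := by
        refine tsum_congr fun n => ?_
        rw [expandU n]
        exact tsum_congr fun m => inner_x m n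
    _ = (Nat.card K : ℝ≥0∞)⁻¹ * ∑' (n : ℕ) (m : ℕ), ∑' γ : Γ, c m n γ := by
        simp_rw [ENNReal.tsum_mul_left]
    _ = (Nat.card K : ℝ≥0∞)⁻¹ * ∑' (m : ℕ) (n : ℕ), ∑' γ : Γ, c m n γ := by
        congr 1
        exact ENNReal.tsum_comm
    _ = (Nat.card K : ℝ≥0∞)⁻¹ * ∑' m : ℕ, (‖ContinuousLinearMap.adjoint W
          (lp.single 2 m (lp.single 2 (1 : Γ ⧸ K) (1:ℂ)))‖₊ : ℝ≥0∞) ^ 2 := by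
        congr 1
        exact tsum_congr fun m => (expandW m).symm
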